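/- Let γ, P_n, P̃_n be as in the context. Fix n ≥ 1 and suppose P_n(x) = ∏_{j=1}^n (x − x_j) and P̃_n(x) = ∏_{j=1}^n (x − x̃_j) with x_1 < x_2 < ⋯ < x_n and x̃_1 < x̃_2 < ⋯ < x̃_n. If γ_1 = γ_2, then the zeros of P_n and P̃_n can never interlace; that is, neither the ordering x̃_1 < x_1 < x̃_2 < x_2 < ⋯ < x̃_n < x_n nor the ordering x_1 < x̃_1 < x_2 < x̃_2 < ⋯ < x_n < x̃_n holds. -/

import Mathlib

open Polynomial

/-- For fixed `n ≥ 1`, with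
`Pₙ(x) = ∏ (x − xⱼ)`, `P̃ₙ(x) = ∏ (x − x̃ⱼ)` and the zeros listed increasingly,
if `γ₁ = γ₂` then the zeros of `Pₙ` and `P̃ₙ` can never interlace
(in either order). -/
theorem stmt_10 (γ : ℕ → ℝ) (hγ1 : 0 < γ 1) (hγ : ∀ n ≥ 2, 0 < γ n)
    (P Pt : ℕ → Polynomial ℝ)
    (hP0 : P 0 = 1) (hP1 : P 1 = X - C (γ 2))
    (hP : ∀ n ≥ 1, P (n+1) =
      (X - C (γ (2*n+1) + γ (2*n+2))) * P n - C (γ (2*n) * γ (2*n+1)) * P (n-1))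
    (hPt0 : Pt 0 = 1) (hPt1 : Pt 1 = X - C (γ 1))
    (hPt : ∀ n ≥ 1, Pt (n+1) =
      (X - C (γ (2*n+1) + γ (2*n+2))) * Pt n - C (γ (2*n - 1) * γ (2*n+2)) * Pt (n-1))
    (n : ℕ) (hn : 1 ≤ n) (x xt : ℕ → ℝ)
    (hPfac : P n = ∏ j ∈ Finset.Icc 1 n, (X - C (x j)))
    (hPtfac : Pt n = ∏ j ∈ Finset.Icc 1 n, (X - C (xt j)))
    (hxmono : ∀ i j, 1 ≤ i → i < j → j ≤ n → x i < x j)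
    (hxtmono : ∀ i j, 1 ≤ i → i < j → j ≤ n → xt i < xt j)
    (heq : γ 1 = γ 2) :
    ¬((∀ i, 1 ≤ i → i ≤ n → xt i < x i) ∧ (∀ i, 1 ≤ i → i < n → x i < xt (i+1))) ∧
    ¬((∀ i, 1 ≤ i → i ≤ n → x i < xt i) ∧ (∀ i, 1 ≤ i → i < n → xt i < x (i+1))) := by
  -- degree bound for Pt
  have hPtdeg : ∀ m : ℕ, (Pt m).degree ≤ (m : ℕ) := by
    intro m
    induction m using Nat.strong_induction_on with
    | _ m ih =>
      match m with
      | 0 => simp [hPt0]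
      | 1 => rw [hPt1, degree_X_sub_C]; exact_mod_cast le_refl 1
      | (k+2) =>
        rw [hPt (k+1) (by omega)]
        refine le_trans (degree_sub_le _ _) (max_le ?_ ?_)
        · refine le_trans (degree_mul_le _ _) ?_
          have h1 := degree_X_sub_C (γ (2*(k+1)+1) + γ (2*(k+1)+2))
          rw [h1]
          have h2 := ih (k+1) (by omega)
          calc (1 : WithBot ℕ) + (Pt (k+1)).degree ≤ 1 + ((k+1 : ℕ) : WithBot ℕ) := by
                exact add_le_add_right h2 1
            _ = ((k+2 : ℕ) : WithBot ℕ) := by push_cast; ring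
        · refine le_trans (degree_mul_le _ _) ?_
          have h2 := ih k (by omega)
          simp only [Nat.add_sub_cancel]
          calc (C (γ (2*(k+1)-1) * γ (2*(k+1)+2))).degree + (Pt k).degree
              ≤ 0 + ((k : ℕ) : WithBot ℕ) := add_le_add degree_C_le h2
            _ ≤ ((k+2 : ℕ) : WithBot ℕ) := by
                rw [zero_add]; exact_mod_cast by omega
  -- degree of difference
  have hD : ∀ m : ℕ, (P (m+1) - Pt (m+1)).degree < (m : ℕ) := by
    intro m
    induction m using Nat.strong_induction_on with
    | _ m ih =>
      match m with
      | 0 =>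
        rw [hP1, hPt1, heq, sub_self, degree_zero]
        exact WithBot.bot_lt_coe 0
      | (k+1) =>
        have hrw : P (k+2) - Pt (k+2) =
            (X - C (γ (2*(k+1)+1) + γ (2*(k+1)+2))) * (P (k+1) - Pt (k+1))
            - C (γ (2*(k+1)) * γ (2*(k+1)+1)) * (P k - Pt k)
            - (C (γ (2*(k+1)) * γ (2*(k+1)+1)) - C (γ (2*(k+1)-1) * γ (2*(k+1)+2))) * Pt k := by
          rw [hP (k+1) (by omega), hPt (k+1) (by omega)]
          simp only [Nat.add_sub_cancel]
          ring
        rw [hrw]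
        refine lt_of_le_of_lt (degree_sub_le _ _) (max_lt (lt_of_le_of_lt (degree_sub_le _ _)
          (max_lt ?_ ?_)) ?_)
        · refine lt_of_le_of_lt (degree_mul_le _ _) ?_
          rw [degree_X_sub_C]
          have h2 := ih k (by omega)
          calc (1 : WithBot ℕ) + (P (k+1) - Pt (k+1)).degree
              < 1 + ((k : ℕ) : WithBot ℕ) := by
                exact WithBot.add_lt_add_left (by norm_num) h2
            _ = ((k+1 : ℕ) : WithBot ℕ) := by push_cast; ring
        · refine lt_of_le_of_lt (degree_mul_le _ _) ?_
          match k with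
          | 0 =>
            rw [hP0, hPt0, sub_self, degree_zero]
            simp [WithBot.add_bot]
          | (j+1) =>
            have h2 := ih j (by omega)
            calc (C (γ (2*(j+2)) * γ (2*(j+2)+1))).degree + (P (j+1) - Pt (j+1)).degree
                ≤ 0 + (P (j+1) - Pt (j+1)).degree := by
                  exact add_le_add_left degree_C_le _
              _ = (P (j+1) - Pt (j+1)).degree := by rw [zero_add]
              _ < ((j : ℕ) : WithBot ℕ) := h2
              _ ≤ ((j+2 : ℕ) : WithBot ℕ) := by exact_mod_cast by omega
        · refine lt_of_le_of_lt (degree_mul_le _ _) ?_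
          calc (C (γ (2*(k+1)) * γ (2*(k+1)+1)) - C (γ (2*(k+1)-1) * γ (2*(k+1)+2))).degree
              + (Pt k).degree
              ≤ 0 + ((k : ℕ) : WithBot ℕ) := by
                exact add_le_add (le_trans (degree_sub_le _ _)
                  (max_le degree_C_le degree_C_le)) (hPtdeg k)
            _ < ((k+1 : ℕ) : WithBot ℕ) := by rw [zero_add]; exact_mod_cast by omega
  -- coefficient at n-1 agrees
  have hcard : (Finset.Icc 1 n).card = n := by rw [Nat.card_Icc]; omega
  have hcoeff : (P n).coeff (n-1) = (Pt n).coeff (n-1) := by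
    have := hD (n-1)
    have hn' : n - 1 + 1 = n := by omega
    rw [hn'] at this
    have hz : (P n - Pt n).coeff (n-1) = 0 := coeff_eq_zero_of_degree_lt this
    rw [coeff_sub] at hz
    linarith
  have hsum : ∑ j ∈ Finset.Icc 1 n, x j = ∑ j ∈ Finset.Icc 1 n, xt j := by
    have h1 : (P n).coeff (n-1) = -∑ j ∈ Finset.Icc 1 n, x j := by
      rw [hPfac]
      have := prod_X_sub_C_coeff_card_pred (Finset.Icc 1 n) x (by rw [hcard]; omega)
      rwa [hcard] at this
    have h2 : (Pt n).coeff (n-1) = -∑ j ∈ Finset.Icc 1 n, xt j := by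
      rw [hPtfac]
      have := prod_X_sub_C_coeff_card_pred (Finset.Icc 1 n) xt (by rw [hcard]; omega)
      rwa [hcard] at this
    have := hcoeff
    rw [h1, h2] at this
    linarith
  have hne : (Finset.Icc 1 n).Nonempty := by
    rw [Finset.nonempty_Icc]; omega
  constructor
  · rintro ⟨h1, -⟩
    have : ∑ j ∈ Finset.Icc 1 n, xt j < ∑ j ∈ Finset.Icc 1 n, x j := by
      refine Finset.sum_lt_sum_of_nonempty hne ?_
      intro i hi
      rw [Finset.mem_Icc] at hi
      exact h1 i hi.1 hi.2
    linarith
  · rintro ⟨h1, -⟩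
    have : ∑ j ∈ Finset.Icc 1 n, x j < ∑ j ∈ Finset.Icc 1 n, xt j := by
      refine Finset.sum_lt_sum_of_nonempty hne ?_
      intro i hi
      rw [Finset.mem_Icc] at hi
      exact h1 i hi.1 hi.2
    linarith
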